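/- Alignment of a circular word with its shifted reversal: let w = C(w_0,…,w_{k−1}) with parameters 0 < p < q, gcd(p,q)=1, k ≥ 1, l > 1, each w_j of length q, viewed on [0, klq²), and consider rev(w) placed on the interval [j_1, klq² + j_1) (i.e. the shift sh^{−j_1}(rev(w))). Among the kq(l−1) positions r at which a designated copy of some w_j begins inside a 0-subsection of w, all but at most 2kq have the property that rev(w_{k−j−1}) occupies the interval [r, r+q) in sh^{−j_1}(rev(w)) as a designated copy inside one of the 0-subsections of rev(w). -/

import Mathlib

/-!
STATEMENT 4: Alignment of a circular word with its shifted reversal.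
-/

namespace Stmt4

/-- The circular operator `C(w_0,…,w_{k−1}) = ∏_{i<q} ∏_{t<k} b^{q−j_i} (w_t)^{l−1} e^{j_i}`. -/
def Cop {A : Type*} (b e : A) (q k l : ℕ) (j : ℕ → ℕ) (w : ℕ → List A) : List A :=
  (List.range q).flatMap fun i =>
    (List.range k).flatMap fun t =>
      List.replicate (q - j i) b ++ (List.replicate (l - 1) (w t)).flatten ++
        List.replicate (j i) e

/-- Viewing `C(w_0,…,w_{k−1})` on `[0, klq²)`, the `c`-th designated copy of `w_t` within the
0-subsection `(w_t)^{l−1}` of the `i`-th 2-subsection begins at position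
`(i·k + t)·lq + (q − j_i) + c·q`. -/
def copyStart (q k l : ℕ) (j : ℕ → ℕ) (i t c : ℕ) : ℕ :=
  (i * k + t) * (l * q) + (q - j i) + c * q

/-- By the reversal formula `rev(w) = ∏_{i'=1}^{q} ∏_{t'=1}^{k} e^{q−j_{i'}} rev(w_{k−t'})^{l−1}
b^{j_{i'}}` (convention `j_q = q`), the `c'`-th designated copy of `rev(w_{k−t'})` in `rev(w)`
begins at `((i'−1)·k + (t'−1))·lq + (q − j_{i'}) + c'·q`; in the frame of
`sh^{−j_1}(rev(w))` (i.e. `rev(w)` placed on `[j_1, klq² + j_1)`) one adds `j_1`. -/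
def revCopyStartShifted (q k l : ℕ) (j : ℕ → ℕ) (i' t' c' : ℕ) : ℕ :=
  j 1 + (((i' - 1) * k + (t' - 1)) * (l * q) + (q - j i') + c' * q)

lemma sum_map_const {α : Type*} (L : List α) (f : α → ℕ) (c : ℕ)
    (h : ∀ x ∈ L, f x = c) : (L.map f).sum = L.length * c := by
  induction L with
  | nil => simp
  | cons a L ih =>
    simp only [List.map_cons, List.sum_cons, List.length_cons, h a (by simp),
      ih (fun x hx => h x (by simp [hx]))]
    ring

lemma flatMap_range_length {A : Type*} (F : ℕ → List A) (n B : ℕ)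
    (hB : ∀ m < n, (F m).length = B) :
    ((List.range n).flatMap F).length = n * B := by
  rw [List.length_flatMap]
  have := sum_map_const (List.range n) (List.length ∘ F) B
    (fun x hx => hB x (List.mem_range.mp hx))
  rw [List.length_range] at this
  exact this

lemma drop_blocks {A : Type*} (F : ℕ → List A) (n B i : ℕ) (hi : i < n)
    (hB : ∀ m < n, (F m).length = B) :
    ∃ R, ((List.range n).flatMap F).drop (i * B) = F i ++ R := by
  refine ⟨((List.range n).drop (i+1)).flatMap F, ?_⟩
  have hsplit : List.range n = (List.range n).take i ++ (List.range n).drop i :=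
    (List.take_append_drop i (List.range n)).symm
  have htake : (List.range n).take i = List.range i := by
    rw [List.take_range, min_eq_left hi.le]
  have hlen : ((List.range i).flatMap F).length = i * B :=
    flatMap_range_length F i B (fun m hm => hB m (hm.trans hi))
  have hdropi : (List.range n).drop i = i :: (List.range n).drop (i+1) := by
    rw [List.drop_eq_getElem_cons (by simpa using hi), List.getElem_range]
  conv_lhs => rw [hsplit, htake, hdropi, List.flatMap_append, List.flatMap_cons]
  rw [List.drop_left' hlen]

section

variable {A : Type*} (b e : A) (q k l : ℕ) (j : ℕ → ℕ) (w : ℕ → List A)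

lemma flatten_repl_length (t n : ℕ) (ht : t < k) (hw : ∀ t < k, (w t).length = q) :
    ((List.replicate n (w t)).flatten).length = n * q := by
  rw [List.length_flatten, List.map_replicate, hw t ht, List.sum_replicate, smul_eq_mul]

lemma G_length (hl : 1 < l) (hj' : ∀ i < q, j i ≤ q) (hw : ∀ t < k, (w t).length = q)
    (i t : ℕ) (hi : i < q) (ht : t < k) :
    (List.replicate (q - j i) b ++ (List.replicate (l - 1) (w t)).flatten ++
        List.replicate (j i) e).length = l * q := by
  rw [List.length_append, List.length_append, List.length_replicate, List.length_replicate,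
    flatten_repl_length q k w t (l-1) ht hw]
  have h1 := hj' i hi
  have h2 : (l - 1) * q + q = l * q := by
    cases l with
    | zero => omega
    | succ l' => simp [Nat.succ_mul]
  omega

lemma cop_drop_take (hl : 1 < l) (hj' : ∀ i < q, j i ≤ q)
    (hw : ∀ t < k, (w t).length = q)
    (i t d : ℕ) (hi : i < q) (ht : t < k) (hd : d < l - 1) :
    ((Cop b e q k l j w).drop ((i * k + t) * (l * q) + (q - j i) + d * q)).take q = w t := by
  set G : ℕ → ℕ → List A := fun i t =>
    List.replicate (q - j i) b ++ (List.replicate (l - 1) (w t)).flatten ++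
      List.replicate (j i) e with hG
  set F : ℕ → List A := fun i => (List.range k).flatMap (G i) with hF
  have hGlen : ∀ i < q, ∀ t < k, (G i t).length = l * q := fun i hi t ht =>
    G_length b e q k l j w hl hj' hw i t hi ht
  have hFlen : ∀ i < q, (F i).length = k * (l * q) := fun i hi =>
    flatMap_range_length (G i) k (l * q) (fun m hm => hGlen i hi m hm)
  have hCop : Cop b e q k l j w = (List.range q).flatMap F := rfl
  obtain ⟨R1, h1⟩ := drop_blocks F q (k * (l * q)) i hi (fun m hm => hFlen m hm)
  obtain ⟨R2, h2⟩ := drop_blocks (G i) k (l * q) t ht (fun m hm => hGlen i hi m hm)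
  have htot : (i * k + t) * (l * q) + (q - j i) + d * q
      = i * (k * (l * q)) + (t * (l * q) + ((q - j i) + d * q)) := by ring
  rw [hCop, htot, ← List.drop_drop, ← List.drop_drop, h1]
  have h2' : List.drop (t * (l * q)) (F i ++ R1) = G i t ++ (R2 ++ R1) := by
    rw [List.drop_append, h2,
      Nat.sub_eq_zero_of_le (by rw [hFlen i hi]; exact Nat.mul_le_mul_right _ ht.le),
      List.drop_zero, List.append_assoc]
  rw [h2']
  -- now drop (q - j i) + d*q within G i t ++ rest
  have hrepl : List.replicate (l - 1) (w t)
      = List.replicate d (w t) ++ (w t :: List.replicate (l - 2 - d) (w t)) := by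
    rw [← List.replicate_succ, ← List.replicate_add]
    congr 1
    omega
  have hGsplit : G i t ++ (R2 ++ R1)
      = List.replicate (q - j i) b ++
        ((List.replicate d (w t)).flatten ++
          (w t ++ ((List.replicate (l - 2 - d) (w t)).flatten ++
            (List.replicate (j i) e ++ (R2 ++ R1))))) := by
    show (List.replicate (q - j i) b ++ (List.replicate (l - 1) (w t)).flatten ++
        List.replicate (j i) e) ++ (R2 ++ R1) = _
    rw [hrepl, List.flatten_append, List.flatten_cons]
    simp [List.append_assoc]
  rw [← List.drop_drop, hGsplit, List.drop_left' List.length_replicate,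
    List.drop_left' (flatten_repl_length q k w t d ht hw),
    List.take_left' (hw t ht)]

end

lemma jprops (p q : ℕ) (hp0 : 0 < p) (hpq : p < q) (hcop : Nat.Coprime p q)
    (j : ℕ → ℕ) (hj : ∀ i < q, j i < q ∧ (p * j i) % q = i % q) (hjq : j q = q) :
    0 < j 1 ∧
    (∀ i < q, j i + j 1 = j (i + 1) ∨ j i + j 1 = j (i + 1) + q) ∧
    (∀ i < q, j (q - 1 - i) = q - j (i + 1)) := by
  have hq2 : 2 ≤ q := by omega
  have huniq : ∀ x y, x < q → y < q → p * x ≡ p * y [MOD q] → x = y := by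
    intro x y hx hy h
    have h2 : x ≡ y [MOD q] :=
      Nat.ModEq.cancel_left_of_coprime (by rwa [Nat.coprime_comm] at hcop) h
    have h3 : x % q = y % q := h2
    rwa [Nat.mod_eq_of_lt hx, Nat.mod_eq_of_lt hy] at h3
  have hmod : ∀ i < q, p * j i ≡ i [MOD q] := fun i hi => (hj i hi).2
  have hj1 : p * j 1 ≡ 1 [MOD q] := hmod 1 (by omega)
  have qzero : q ≡ 0 [MOD q] := Nat.modEq_zero_iff_dvd.2 dvd_rfl
  have hcancel : ∀ x, x ≤ q → p * (q - x) + p * x ≡ 0 [MOD q] := by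
    intro x hx
    have h : p * (q - x) + p * x = p * q := by
      rw [← Nat.mul_add, Nat.sub_add_cancel hx]
    rw [h]
    exact Nat.modEq_zero_iff_dvd.2 (dvd_mul_left q p)
  have hj1pos : 0 < j 1 := by
    rcases Nat.eq_zero_or_pos (j 1) with h | h
    · exfalso
      have h2 : p * j 1 % q = 1 % q := hj1
      rw [h, Nat.mul_zero, Nat.zero_mod, Nat.mod_eq_of_lt hq2] at h2
      omega
    · exact h
  have hj1lt : j 1 < q := (hj 1 (by omega)).1
  have hstep : ∀ i, i + 1 < q → j (i + 1) = (j i + j 1) % q := by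
    intro i h
    refine (huniq _ _ (Nat.mod_lt _ (by omega)) ((hj _ h).1) ?_).symm
    calc p * ((j i + j 1) % q) ≡ p * (j i + j 1) [MOD q] :=
          Nat.ModEq.mul_left p (Nat.mod_modEq _ q)
      _ = p * j i + p * j 1 := by ring
      _ ≡ i + 1 [MOD q] := (hmod i (by omega)).add hj1
      _ ≡ p * j (i + 1) [MOD q] := (hmod _ h).symm
  have hsym : ∀ i < q, j (q - 1 - i) = q - j (i + 1) := by
    intro i hi
    rcases eq_or_lt_of_le (Nat.succ_le_of_lt hi) with heq | hlt
    · have hi' : i = q - 1 := by omega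
      have hz : j 0 = 0 := by
        refine huniq _ _ ((hj 0 (by omega)).1) (by omega) ?_
        calc p * j 0 ≡ 0 [MOD q] := hmod 0 (by omega)
          _ = p * 0 := by ring
      have e0 : q - 1 - i = 0 := by omega
      have e1 : i + 1 = q := heq
      rw [e0, hz, e1, hjq]
      omega
    · have hxlt : j (i + 1) < q := (hj _ hlt).1
      have hxpos : 0 < j (i + 1) := by
        rcases Nat.eq_zero_or_pos (j (i + 1)) with h | h
        · exfalso
          have h2 : p * j (i + 1) % q = (i + 1) % q := (hj _ hlt).2
          rw [h, Nat.mul_zero, Nat.zero_mod, Nat.mod_eq_of_lt hlt] at h2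
          omega
        · exact h
      refine huniq _ _ ((hj _ (by omega)).1) (by omega) ?_
      refine Nat.ModEq.add_right_cancel' (p * j (i + 1)) ?_
      calc p * j (q - 1 - i) + p * j (i + 1) ≡ (q - 1 - i) + (i + 1) [MOD q] :=
            (hmod _ (by omega)).add (hmod _ hlt)
        _ = q := by omega
        _ ≡ 0 [MOD q] := qzero
        _ ≡ p * (q - j (i + 1)) + p * j (i + 1) [MOD q] := (hcancel _ hxlt.le).symm
  have hjq1 : j (q - 1) = q - j 1 := by
    have := hsym 0 (by omega)
    simpa using this
  refine ⟨hj1pos, ?_, hsym⟩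
  intro i hi
  rcases eq_or_lt_of_le (Nat.succ_le_of_lt hi) with heq | hlt
  · left
    have hi' : i = q - 1 := by omega
    have e1 : i + 1 = q := heq
    have e2 : j (i + 1) = q := by rw [e1, hjq]
    rw [hi', hjq1] at *
    omega
  · rw [hstep i hlt]
    have h1 : j i < q := (hj i hi).1
    rcases Nat.lt_or_ge (j i + j 1) q with h | h
    · left; rw [Nat.mod_eq_of_lt h]
    · right
      rw [Nat.mod_eq_sub_mod h, Nat.mod_eq_of_lt (by omega)]
      omega


lemma rev_window {A : Type*} (l : List A) (m n : ℕ) (h : m + n ≤ l.length) :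
    (l.reverse.drop m).take n = ((l.drop (l.length - m - n)).take n).reverse := by
  have h1 : l.reverse.drop m = (l.take (l.length - m)).reverse := by
    rw [List.reverse_take]; congr 1; omega
  rw [h1]
  have h2 : ((l.take (l.length - m)).drop (l.length - m - n)).reverse
      = (l.take (l.length - m)).reverse.take n := by
    rw [List.reverse_drop]; congr 1
    rw [List.length_take]; omega
  rw [← h2, List.drop_take]
  congr 2
  omega

lemma arith1 (X q j1 ji ji1 cq c'q : ℕ) (h1 : ji < q) (h2 : ji1 ≤ q)
    (h3 : 0 < j1) (h3' : j1 < q)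
    (hcase : (ji + j1 = ji1 ∧ c'q = cq) ∨ (ji + j1 = ji1 + q ∧ c'q + q = cq)) :
    j1 + (X + (q - ji1) + c'q) = X + (q - ji) + cq := by omega

lemma arith2 (L P P'' B q ji ji1 j1 cq dq : ℕ)
    (hLB : P + P'' + B = L) (hji : ji < q) (hji1 : ji1 ≤ q)
    (hj1 : 0 < j1) (hj1q : j1 < q) (hcq : q ≤ cq)
    (hcase : (cq + dq + q + q = B ∧ ji + j1 = ji1) ∨ (cq + dq + q = B ∧ ji + j1 = ji1 + q)) :
    L - (P + (q - ji) + cq - j1) - q = P'' + ji1 + dq := by omega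

section
variable {A : Type*} (b e : A) (q k l : ℕ) (j : ℕ → ℕ) (w : ℕ → List A)

lemma cop_length (hl : 1 < l) (hj' : ∀ i < q, j i ≤ q)
    (hw : ∀ t < k, (w t).length = q) :
    (Cop b e q k l j w).length = q * (k * (l * q)) := by
  refine flatMap_range_length _ q _ (fun i hi => ?_)
  exact flatMap_range_length _ k _ (fun t ht => G_length b e q k l j w hl hj' hw i t hi ht)

end

open Classical in
/-- Alignment with the shifted reversal: among the `kq(l−1)` designated copies of the words
`w_t` in `w = C(w_0,…,w_{k−1})` (indexed by the 2-subsection `i < q`, the word index `t < k`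
and the copy index `c < l−1`, beginning at `r = copyStart q k l j i t c`), all but at most
`2kq` are such that the designated copy of `rev(w_{k−t−1})` (word index `t' = t+1`) of some
0-subsection of `rev(w)` occupies exactly the interval `[r, r+q)` of `sh^{−j_1}(rev(w))`. -/
theorem alignment_with_shifted_reversal
    {A : Type*} (b e : A) (hbe : b ≠ e)
    (p q k l : ℕ) (hp0 : 0 < p) (hpq : p < q) (hcop : Nat.Coprime p q)
    (hk : 1 ≤ k) (hl : 1 < l)
    (j : ℕ → ℕ) (hj : ∀ i < q, j i < q ∧ (p * j i) % q = i % q)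
    (hjq : j q = q)
    (w : ℕ → List A) (hw : ∀ i < k, (w i).length = q) :
    ((Finset.range q ×ˢ Finset.range k ×ˢ Finset.range (l - 1)).card = q * k * (l - 1)) ∧
    ((Finset.range q ×ˢ Finset.range k ×ˢ Finset.range (l - 1)).filter
      (fun itc : ℕ × ℕ × ℕ =>
        ¬ ∃ i' c', 1 ≤ i' ∧ i' ≤ q ∧ c' < l - 1 ∧
          revCopyStartShifted q k l j i' (itc.2.1 + 1) c'
              = copyStart q k l j itc.1 itc.2.1 itc.2.2 ∧
          (((Cop b e q k l j w).reverse.drop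
              (copyStart q k l j itc.1 itc.2.1 itc.2.2 - j 1)).take q
            = (w (k - itc.2.1 - 1)).reverse))).card ≤ 2 * k * q := by
  have hq2 : 2 ≤ q := by omega
  have hj' : ∀ i < q, j i ≤ q := fun i hi => (hj i hi).1.le
  obtain ⟨hj1pos, hjsum, hjsym⟩ := jprops p q hp0 hpq hcop j hj hjq
  have hj1lt : j 1 < q := (hj 1 hq2).1
  have hL : (Cop b e q k l j w).length = q * (k * (l * q)) :=
    cop_length b e q k l j w hl hj' hw
  have key : ∀ i t c : ℕ, i < q → t < k → c < l - 1 → 1 ≤ c →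
      ∃ i' c', 1 ≤ i' ∧ i' ≤ q ∧ c' < l - 1 ∧
        revCopyStartShifted q k l j i' (t + 1) c' = copyStart q k l j i t c ∧
        (((Cop b e q k l j w).reverse.drop (copyStart q k l j i t c - j 1)).take q
          = (w (k - t - 1)).reverse) := by
    intro i t c hi ht hc hc1
    have hji1le : j (i + 1) ≤ q := by
      rcases eq_or_lt_of_le (Nat.succ_le_of_lt hi) with heq | hlt
      · rw [show i + 1 = q from heq, hjq]
      · exact (hj _ hlt).1.le
    have main : ∀ c' d : ℕ, c' < l - 1 → d < l - 1 →
        ((j i + j 1 = j (i + 1) ∧ c' * q = c * q) ∨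
          (j i + j 1 = j (i + 1) + q ∧ c' * q + q = c * q)) →
        ((c * q + d * q + q + q = l * q ∧ j i + j 1 = j (i + 1)) ∨
          (c * q + d * q + q = l * q ∧ j i + j 1 = j (i + 1) + q)) →
        ∃ i' c', 1 ≤ i' ∧ i' ≤ q ∧ c' < l - 1 ∧
          revCopyStartShifted q k l j i' (t + 1) c' = copyStart q k l j i t c ∧
          (((Cop b e q k l j w).reverse.drop (copyStart q k l j i t c - j 1)).take q
            = (w (k - t - 1)).reverse) := by
      intro c' d hc' hd hcc hdd
      refine ⟨i + 1, c', by omega, by omega, hc', ?_, ?_⟩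
      · show revCopyStartShifted q k l j (i + 1) (t + 1) c' = copyStart q k l j i t c
        simp only [revCopyStartShifted, copyStart, Nat.add_sub_cancel]
        exact arith1 ((i * k + t) * (l * q)) q (j 1) (j i) (j (i + 1)) (c * q) (c' * q)
          (hj i hi).1 hji1le hj1pos hj1lt hcc
      · have hcs : copyStart q k l j i t c = (i * k + t) * (l * q) + (q - j i) + c * q := rfl
        have hm : (copyStart q k l j i t c - j 1) + q ≤ (Cop b e q k l j w).length := by
          rw [hL, hcs]
          have h1 : i * k + t + 1 ≤ q * k := by
            calc i * k + t + 1 ≤ i * k + k := by omega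
              _ = (i + 1) * k := by ring
              _ ≤ q * k := Nat.mul_le_mul (by omega) le_rfl
          have h3 : c * q + q + q = (c + 2) * q := by ring
          have h4 : (c + 2) * q ≤ l * q := Nat.mul_le_mul (by omega) le_rfl
          have h5 : q - j i ≤ q := Nat.sub_le _ _
          have h6 : (i * k + t) * (l * q) + l * q = (i * k + t + 1) * (l * q) := by ring
          have h7 : (i * k + t + 1) * (l * q) ≤ (q * k) * (l * q) := Nat.mul_le_mul h1 le_rfl
          have h8 : (q * k) * (l * q) = q * (k * (l * q)) := by ring
          omega
        rw [rev_window _ _ _ hm]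
        have e1 : k - t - 1 = k - 1 - t := by omega
        rw [e1, hL]
        have hjj : q - j (q - 1 - i) = j (i + 1) := by
          rw [hjsym i hi]; omega
        have hstart : q * (k * (l * q)) - (copyStart q k l j i t c - j 1) - q
            = ((q - 1 - i) * k + (k - 1 - t)) * (l * q) + (q - j (q - 1 - i)) + d * q := by
          rw [hjj, hcs]
          have hLB : (i * k + t) * (l * q) + ((q - 1 - i) * k + (k - 1 - t)) * (l * q) + l * q
              = q * (k * (l * q)) := by
            obtain ⟨u, hu⟩ : ∃ u, q = i + 1 + u := ⟨q - 1 - i, by omega⟩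
            obtain ⟨v, hv⟩ : ∃ v, k = t + 1 + v := ⟨k - 1 - t, by omega⟩
            have e2 : q - 1 - i = u := by omega
            have e3 : k - 1 - t = v := by omega
            rw [e2, e3, hu, hv]; ring
          have hcq : q ≤ c * q := by
            calc q = 1 * q := (one_mul q).symm
              _ ≤ c * q := Nat.mul_le_mul hc1 le_rfl
          exact arith2 _ _ _ _ _ _ _ _ _ _ hLB (hj i hi).1 hji1le hj1pos hj1lt hcq hdd
        rw [hstart]
        rw [cop_drop_take b e q k l j w hl hj' hw (q - 1 - i) (k - 1 - t) d
          (by omega) (by omega) hd]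
    rcases hjsum i hi with hA | hB
    · refine main c (l - 2 - c) hc (by omega) (Or.inl ⟨hA, rfl⟩) (Or.inl ⟨?_, hA⟩)
      have hce : c + (l - 2 - c) + 2 = l := by omega
      calc c * q + (l - 2 - c) * q + q + q = (c + (l - 2 - c) + 2) * q := by ring
        _ = l * q := by rw [hce]
    · refine main (c - 1) (l - 1 - c) (by omega) (by omega) (Or.inr ⟨hB, ?_⟩)
        (Or.inr ⟨?_, hB⟩)
      · obtain ⟨c₀, rfl⟩ : ∃ c₀, c = c₀ + 1 := ⟨c - 1, by omega⟩
        simp only [Nat.add_sub_cancel]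
        ring
      · have hce : c + (l - 1 - c) + 1 = l := by omega
        calc c * q + (l - 1 - c) * q + q = (c + (l - 1 - c) + 1) * q := by ring
          _ = l * q := by rw [hce]
  constructor
  · simp [Finset.card_product, mul_assoc]
  · have hsub : ((Finset.range q ×ˢ Finset.range k ×ˢ Finset.range (l - 1)).filter
        (fun itc : ℕ × ℕ × ℕ =>
          ¬ ∃ i' c', 1 ≤ i' ∧ i' ≤ q ∧ c' < l - 1 ∧
            revCopyStartShifted q k l j i' (itc.2.1 + 1) c'
                = copyStart q k l j itc.1 itc.2.1 itc.2.2 ∧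
            (((Cop b e q k l j w).reverse.drop
                (copyStart q k l j itc.1 itc.2.1 itc.2.2 - j 1)).take q
              = (w (k - itc.2.1 - 1)).reverse)))
        ⊆ Finset.range q ×ˢ Finset.range k ×ˢ ({0} : Finset ℕ) := by
      intro x hx
      rw [Finset.mem_filter] at hx
      obtain ⟨hx1, hx2⟩ := hx
      simp only [Finset.mem_product, Finset.mem_range] at hx1
      simp only [Finset.mem_product, Finset.mem_range, Finset.mem_singleton]
      refine ⟨hx1.1, hx1.2.1, ?_⟩
      by_contra h0
      exact hx2 (key x.1 x.2.1 x.2.2 hx1.1 hx1.2.1 hx1.2.2 (by omega))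
    calc ((Finset.range q ×ˢ Finset.range k ×ˢ Finset.range (l - 1)).filter _).card
        ≤ (Finset.range q ×ˢ Finset.range k ×ˢ ({0} : Finset ℕ)).card :=
          Finset.card_le_card hsub
      _ = q * (k * 1) := by simp [Finset.card_product]
      _ = k * q := by ring
      _ ≤ 2 * (k * q) := Nat.le_mul_of_pos_left _ (by norm_num)
      _ = 2 * k * q := by ring


end Stmt4
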